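/- Let Z' ⊆ Z be nonempty and closed under complex conjugation and let M : Z' → B(𝔥) satisfy (M_z)* = M_{z̄} and M_z − M_w = (z − w)·(G_{w̄})* ∘ G_z for all z, w ∈ Z'. Then: (a) for every z ∈ Z', M_z − (M_z)* = (z − z̄)·(G_z)* ∘ G_z; (b) if θ ∈ B(𝔥) is self-adjoint, z ∈ Z' has nonzero imaginary part, and G_z is injective, then M_z − θ is injective. -/

import Mathlib

open ContinuousLinearMap

variable {H 𝔥 : Type*}
  [NormedAddCommGroup H] [InnerProductSpace ℂ H] [CompleteSpace H]
  [NormedAddCommGroup 𝔥] [InnerProductSpace ℂ 𝔥] [CompleteSpace 𝔥]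

/-- `G_z := (T_{z̄})*`. -/
noncomputable def G (T : ℂ → H →L[ℂ] 𝔥) (z : ℂ) : 𝔥 →L[ℂ] H :=
  adjoint (T ((starRingEnd ℂ) z))

/-- Core of the proof of Lemma 5.9 of the paper: for a Weyl-type family `M` one has
(a) `M_z − M_z* = (z − z̄) G_z* G_z`, and (b) if `θ` is self-adjoint, `Im z ≠ 0` and
`G_z` is injective, then `M_z − θ` is injective. -/
theorem statement14
    (Z : Set ℂ) (hZne : Z.Nonempty) (hZconj : ∀ z ∈ Z, (starRingEnd ℂ) z ∈ Z)
    (R : ℂ → H →L[ℂ] H)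
    (hRres : ∀ z ∈ Z, ∀ w ∈ Z, R z - R w = (w - z) • (R w ∘L R z))
    (hRadj : ∀ z ∈ Z, adjoint (R z) = R ((starRingEnd ℂ) z))
    (T : ℂ → H →L[ℂ] 𝔥)
    (hT : ∀ z ∈ Z, ∀ w ∈ Z, T z - T w = (w - z) • (T w ∘L R z))
    (Z' : Set ℂ) (hZ'sub : Z' ⊆ Z) (hZ'ne : Z'.Nonempty)
    (hZ'conj : ∀ z ∈ Z', (starRingEnd ℂ) z ∈ Z')
    (M : ℂ → 𝔥 →L[ℂ] 𝔥)
    (hMadj : ∀ z ∈ Z', adjoint (M z) = M ((starRingEnd ℂ) z))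
    (hMres : ∀ z ∈ Z', ∀ w ∈ Z',
      M z - M w = (z - w) • (adjoint (G T ((starRingEnd ℂ) w)) ∘L G T z)) :
    (∀ z ∈ Z',
        M z - adjoint (M z)
          = (z - (starRingEnd ℂ) z) • (adjoint (G T z) ∘L G T z))
    ∧ (∀ θ : 𝔥 →L[ℂ] 𝔥, IsSelfAdjoint θ →
        ∀ z ∈ Z', z.im ≠ 0 → Function.Injective (G T z) →
          Function.Injective (M z - θ)) := by

  have ha : ∀ z ∈ Z',
      M z - adjoint (M z)
        = (z - (starRingEnd ℂ) z) • (adjoint (G T z) ∘L G T z) := by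
    intro z hz
    have hzc := hZ'conj z hz
    have h := hMres z hz _ hzc
    rw [Complex.conj_conj] at h
    rw [hMadj z hz]
    exact h
  refine ⟨ha, ?_⟩
  intro θ hθ z hz him hG u v huv
  have hw : (M z - θ) (u - v) = 0 := by
    rw [map_sub, huv, sub_self]
  set w := u - v with hwdef
  have hMw : M z w = θ w := by
    have := hw
    rw [ContinuousLinearMap.sub_apply, sub_eq_zero] at this
    exact this
  have key := congrArg (fun A : 𝔥 →L[ℂ] 𝔥 => inner ℂ w (A w) : (𝔥 →L[ℂ] 𝔥) → ℂ) (ha z hz)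
  simp only [ContinuousLinearMap.sub_apply, ContinuousLinearMap.smul_apply,
    ContinuousLinearMap.coe_comp', Function.comp_apply, inner_sub_right,
    inner_smul_right, ContinuousLinearMap.adjoint_inner_right] at key
  have hθw : (inner ℂ (θ w) w : ℂ) = inner ℂ w (θ w) := by
    conv_lhs => rw [← ContinuousLinearMap.isSelfAdjoint_iff'.mp hθ]
    exact ContinuousLinearMap.adjoint_inner_left θ w w
  have hzero : (0 : ℂ) = (z - (starRingEnd ℂ) z) * inner ℂ (G T z w) (G T z w) := by
    rw [← key, hMw, hθw]
    ring
  have hzne : z - (starRingEnd ℂ) z ≠ 0 := by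
    rw [Complex.sub_conj]
    simp [Complex.ext_iff, him]
  have hGw : (inner ℂ (G T z w) (G T z w) : ℂ) = 0 := by
    rcases mul_eq_zero.mp hzero.symm with h | h
    · exact absurd h hzne
    · exact h
  have hw0 : G T z w = 0 := by
    rwa [inner_self_eq_zero] at hGw
  have : w = 0 := hG (by rw [hw0, map_zero])
  exact sub_eq_zero.mp this
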